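/- Let H be an infinite-dimensional separable real Hilbert space and let K be a compact skew-adjoint bounded operator on H (K† = −K) that is Hilbert–Schmidt with respect to some Hilbert basis e : ℕ → H, i.e. ∑' n, ‖K (e n)‖² < ∞. Then there exist sequences u, v : ℕ → H such that the combined family {u j} ∪ {v j} (j ∈ ℕ) is orthonormal, and a sequence λ : ℕ → ℝ of nonnegative reals with ∑' j, (λ j)² < ∞, such that for every f ∈ H, K f = ∑' j, λ j • (⟪u j, f⟫ • (v j) − ⟪v j, f⟫ • (u j)), the series converging in H. -/

import Mathlib

open ContinuousLinearMap Filter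
open scoped RealInnerProductSpace Topology

section Aux

variable {H : Type*} [NormedAddCommGroup H] [InnerProductSpace ℝ H] [CompleteSpace H]

/-- The set of values `‖K x‖ ^ 2` over unit vectors of `V`. -/
noncomputable def muSet (K : H →L[ℝ] H) (V : Submodule ℝ H) : Set ℝ :=
  (fun x => ‖K x‖ ^ 2) '' {x : H | x ∈ V ∧ ‖x‖ = 1}

/-- The supremum of `‖K x‖ ^ 2` over unit vectors of `V`. -/
noncomputable def mu (K : H →L[ℝ] H) (V : Submodule ℝ H) : ℝ :=
  sSup (muSet K V)

theorem muSet_bddAbove (K : H →L[ℝ] H) (V : Submodule ℝ H) : BddAbove (muSet K V) := by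
  refine ⟨‖K‖ ^ 2, ?_⟩
  rintro r ⟨x, ⟨-, hx1⟩, rfl⟩
  have := K.le_opNorm x
  rw [hx1, mul_one] at this
  exact pow_le_pow_left₀ (norm_nonneg _) this 2

theorem mu_nonneg (K : H →L[ℝ] H) {V : Submodule ℝ H} (hne : ∃ x ∈ V, ‖x‖ = 1) :
    0 ≤ mu K V := by
  obtain ⟨x, hxV, hx1⟩ := hne
  have hmem : ‖K x‖ ^ 2 ∈ muSet K V := ⟨x, ⟨hxV, hx1⟩, rfl⟩
  exact le_trans (by positivity) (le_csSup (muSet_bddAbove K V) hmem)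

theorem norm_K_sq_le_mu (K : H →L[ℝ] H) {V : Submodule ℝ H} {x : H} (hx : x ∈ V)
    (hne : ∃ y ∈ V, ‖y‖ = 1) : ‖K x‖ ^ 2 ≤ mu K V * ‖x‖ ^ 2 := by
  rcases eq_or_ne x 0 with rfl | hx0
  · simp
  · have hc : ‖x‖ ≠ 0 := norm_ne_zero_iff.2 hx0
    set y := ‖x‖⁻¹ • x with hy
    have hyV : y ∈ V := V.smul_mem _ hx
    have hy1 : ‖y‖ = 1 := by
      rw [hy, norm_smul, norm_inv, norm_norm, inv_mul_cancel₀ hc]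
    have hmem : ‖K y‖ ^ 2 ∈ muSet K V := ⟨y, ⟨hyV, hy1⟩, rfl⟩
    have hle : ‖K y‖ ^ 2 ≤ mu K V := le_csSup (muSet_bddAbove K V) hmem
    have hKy : ‖K y‖ ^ 2 = (‖x‖ ^ 2)⁻¹ * ‖K x‖ ^ 2 := by
      rw [hy, map_smul, norm_smul, norm_inv, norm_norm, mul_pow, inv_pow]
    rw [hKy] at hle
    have h2 : 0 < ‖x‖ ^ 2 := by positivity
    calc ‖K x‖ ^ 2 = ((‖x‖ ^ 2)⁻¹ * ‖K x‖ ^ 2) * ‖x‖ ^ 2 := by field_simp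
    _ ≤ mu K V * ‖x‖ ^ 2 := mul_le_mul_of_nonneg_right hle h2.le

theorem skew_inner (K : H →L[ℝ] H) (hK : adjoint K = -K) (x y : H) :
    ⟪K x, y⟫ = -⟪x, K y⟫ := by
  rw [← ContinuousLinearMap.adjoint_inner_right, hK]
  simp [inner_neg_right]

/-- A finite dimensional subspace of an infinite dimensional Hilbert space has a unit
vector in its orthogonal complement. -/
theorem exists_unit_orthogonal (hinf : ¬ FiniteDimensional ℝ H) (W : Submodule ℝ H)
    (hW : FiniteDimensional ℝ W) : ∃ x ∈ Wᗮ, ‖x‖ = 1 := by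
  have hne : Wᗮ ≠ ⊥ := by
    intro h
    rw [Submodule.orthogonal_eq_bot_iff] at h
    rw [h] at hW
    exact hinf (Module.Finite.equiv Submodule.topEquiv)
  obtain ⟨x, hxW, hx0⟩ := Submodule.exists_mem_ne_zero_of_ne_bot hne
  have hc : ‖x‖ ≠ 0 := norm_ne_zero_iff.2 hx0
  exact ⟨‖x‖⁻¹ • x, Wᗮ.smul_mem _ hxW, by
    rw [norm_smul, norm_inv, norm_norm, inv_mul_cancel₀ hc]⟩

theorem exists_pair_orthogonal (hinf : ¬ FiniteDimensional ℝ H) (W : Submodule ℝ H)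
    (hW : FiniteDimensional ℝ W) :
    ∃ x y : H, x ∈ Wᗮ ∧ y ∈ Wᗮ ∧ ‖x‖ = 1 ∧ ‖y‖ = 1 ∧ ⟪x, y⟫ = 0 := by
  obtain ⟨x, hxW, hx1⟩ := exists_unit_orthogonal hinf W hW
  have hfin : FiniteDimensional ℝ (W ⊔ (ℝ ∙ x) : Submodule ℝ H) := by
    have : FiniteDimensional ℝ (ℝ ∙ x : Submodule ℝ H) := by infer_instance
    infer_instance
  obtain ⟨y, hyW, hy1⟩ := exists_unit_orthogonal hinf (W ⊔ (ℝ ∙ x)) hfin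
  have hyW' : y ∈ Wᗮ := Submodule.orthogonal_le le_sup_left hyW
  have hyx : y ∈ (ℝ ∙ x)ᗮ := Submodule.orthogonal_le le_sup_right hyW
  exact ⟨x, y, hxW, hyW', hx1, hy1, by
    rw [real_inner_comm]
    exact Submodule.mem_orthogonal_singleton_iff_inner_left.1 hyx⟩

/-- Existence of a top eigenvector of `-K ∘ K` on an invariant subspace, via compactness. -/
theorem exists_eigenvector (K : H →L[ℝ] H) (hKcompact : IsCompactOperator K)
    (hK : adjoint K = -K) (V : Submodule ℝ H) (hVc : IsClosed (V : Set H))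
    (hVK : ∀ x ∈ V, K x ∈ V) (hne : ∃ x ∈ V, ‖x‖ = 1) (hmu : 0 < mu K V) :
    ∃ u ∈ V, ‖u‖ = 1 ∧ K (K u) = -(mu K V) • u := by
  set μ := mu K V with hmudef
  set T : H →L[ℝ] H := -(K.comp K) with hTdef
  have hTapp : ∀ z, T z = -(K (K z)) := fun z => rfl
  have hTinner : ∀ z y, ⟪T z, y⟫ = ⟪K z, K y⟫ := by
    intro z y
    rw [hTapp, inner_neg_left, skew_inner K hK, neg_neg]
  have hTV : ∀ z ∈ V, T z ∈ V := by
    intro z hz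
    rw [hTapp]
    exact V.neg_mem (hVK _ (hVK _ hz))
  have hmuset : ∀ {z : H}, z ∈ V → ‖K z‖ ^ 2 ≤ μ * ‖z‖ ^ 2 :=
    fun hz => norm_K_sq_le_mu K hz hne
  have hTbound : ∀ y ∈ V, ‖T y‖ ^ 2 ≤ μ * ‖K y‖ ^ 2 := by
    intro y hy
    have e1 : ‖T y‖ ^ 2 ≤ ‖K y‖ * ‖K (T y)‖ := by
      calc ‖T y‖ ^ 2 = ⟪T y, T y⟫ := (real_inner_self_eq_norm_sq _).symm
        _ = ⟪K y, K (T y)⟫ := hTinner y (T y)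
        _ ≤ ‖K y‖ * ‖K (T y)‖ := real_inner_le_norm _ _
    have e2 : ‖K (T y)‖ ^ 2 ≤ μ * ‖T y‖ ^ 2 := hmuset (hTV y hy)
    rcases eq_or_ne (‖T y‖) 0 with h0 | h0
    · rw [h0]
      have : (0:ℝ) ≤ μ * ‖K y‖ ^ 2 := by positivity
      simpa using this
    · have hpos : 0 < ‖T y‖ ^ 2 := by positivity
      have e3 : (‖T y‖ ^ 2) * (‖T y‖ ^ 2) ≤ (‖K y‖ * ‖K (T y)‖) * (‖K y‖ * ‖K (T y)‖) :=
        mul_le_mul e1 e1 (by positivity) (by positivity)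
      nlinarith [sq_nonneg (‖K y‖), norm_nonneg (K y), norm_nonneg (K (T y)), norm_nonneg (T y)]
  have hseq : ∀ n : ℕ, ∃ z, z ∈ V ∧ ‖z‖ = 1 ∧ μ - 1/((n:ℝ)+1) < ‖K z‖ ^ 2 := by
    intro n
    have hlt : μ - 1/((n:ℝ)+1) < μ := by
      have : (0:ℝ) < 1/((n:ℝ)+1) := by positivity
      linarith
    have hnemuset : (muSet K V).Nonempty := by
      obtain ⟨z, hzV, hz1⟩ := hne
      exact ⟨‖K z‖ ^ 2, z, ⟨hzV, hz1⟩, rfl⟩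
    obtain ⟨r, hr, hlt'⟩ := exists_lt_of_lt_csSup hnemuset hlt
    obtain ⟨z, ⟨hzV, hz1⟩, rfl⟩ := hr
    exact ⟨z, hzV, hz1, hlt'⟩
  choose x hxV hx1 hxlt using hseq
  have hxle : ∀ n, ‖K (x n)‖ ^ 2 ≤ μ := by
    intro n
    have := hmuset (hxV n)
    rwa [hx1, one_pow, mul_one] at this
  have hQtend : Tendsto (fun n => ‖K (x n)‖ ^ 2) atTop (𝓝 μ) := by
    apply tendsto_of_tendsto_of_tendsto_of_le_of_le (g := fun n : ℕ => μ - 1/((n:ℝ)+1))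
      (h := fun _ : ℕ => μ)
    · have h1 : Tendsto (fun n : ℕ => 1/((n:ℝ)+1)) atTop (𝓝 0) :=
        tendsto_one_div_add_atTop_nhds_zero_nat
      simpa using tendsto_const_nhds.sub h1
    · exact tendsto_const_nhds
    · exact fun n => (hxlt n).le
    · exact hxle
  have hb : ∀ n, ‖T (x n) - μ • x n‖ ^ 2 ≤ μ ^ 2 - μ * ‖K (x n)‖ ^ 2 := by
    intro n
    have hexp := norm_sub_sq_real (T (x n)) (μ • x n)
    have h1 : ⟪T (x n), μ • x n⟫ = μ * ‖K (x n)‖ ^ 2 := by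
      rw [real_inner_smul_right, hTinner, real_inner_self_eq_norm_sq]
    have h2 : ‖μ • x n‖ ^ 2 = μ ^ 2 := by
      rw [norm_smul, hx1, mul_one, Real.norm_eq_abs, sq_abs]
    have h3 : ‖T (x n)‖ ^ 2 ≤ μ * ‖K (x n)‖ ^ 2 := hTbound (x n) (hxV n)
    rw [hexp, h1, h2]
    linarith
  have hsq : Tendsto (fun n => ‖T (x n) - μ • x n‖ ^ 2) atTop (𝓝 0) := by
    apply tendsto_of_tendsto_of_tendsto_of_le_of_le (g := fun _ : ℕ => (0:ℝ))
      (h := fun n => μ ^ 2 - μ * ‖K (x n)‖ ^ 2)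
    · exact tendsto_const_nhds
    · have h0 : Tendsto (fun n => μ ^ 2 - μ * ‖K (x n)‖ ^ 2) atTop (𝓝 (μ ^ 2 - μ * μ)) :=
        tendsto_const_nhds.sub (hQtend.const_mul μ)
      have : μ ^ 2 - μ * μ = 0 := by ring
      rwa [this] at h0
    · intro n; positivity
    · exact hb
  have hnormtend : Tendsto (fun n => ‖T (x n) - μ • x n‖) atTop (𝓝 0) := by
    have h := (Real.continuous_sqrt.tendsto 0).comp hsq
    simp only [Function.comp_def, Real.sqrt_zero] at h
    convert h using 2 with n
    rw [Real.sqrt_sq (norm_nonneg _)]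
  have hdiff : Tendsto (fun n => T (x n) - μ • x n) atTop (𝓝 0) :=
    tendsto_zero_iff_norm_tendsto_zero.2 hnormtend
  have hTcomp : IsCompactOperator (⇑T) := by
    have h1 : IsCompactOperator (⇑K ∘ ⇑K) := hKcompact.continuous_comp K.continuous
    have h2 : ⇑T = -(⇑K ∘ ⇑K) := by funext z; simp [hTapp]
    rw [h2]
    exact h1.neg
  have hcomp : IsCompact (closure (⇑T '' Metric.closedBall 0 1)) :=
    IsCompactOperator.isCompact_closure_image_closedBall (𝕜₁ := ℝ)
      (f := (T : H →ₗ[ℝ] H)) hTcomp 1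
  have hmem : ∀ n, T (x n) ∈ closure (⇑T '' Metric.closedBall 0 1) := by
    intro n
    apply subset_closure
    exact ⟨x n, by simp [Metric.mem_closedBall, hx1 n], rfl⟩
  obtain ⟨y, -, φ, hφ, hytend⟩ := hcomp.tendsto_subseq hmem
  have hμx : Tendsto (fun k => μ • x (φ k)) atTop (𝓝 y) := by
    have h1 : Tendsto (fun k => T (x (φ k)) - μ • x (φ k)) atTop (𝓝 0) :=
      hdiff.comp hφ.tendsto_atTop
    have h2 : Tendsto (fun k => T (x (φ k)) - (T (x (φ k)) - μ • x (φ k))) atTop (𝓝 (y - 0)) :=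
      hytend.sub h1
    simpa using h2
  have hxtend : Tendsto (fun k => x (φ k)) atTop (𝓝 (μ⁻¹ • y)) := by
    have h1 := hμx.const_smul (μ⁻¹)
    simp only [smul_smul, inv_mul_cancel₀ hmu.ne', one_smul] at h1
    exact h1
  set u := μ⁻¹ • y with hu
  have huV : u ∈ V := by
    have : ∀ k, x (φ k) ∈ (V : Set H) := fun k => hxV (φ k)
    exact hVc.mem_of_tendsto hxtend (Filter.Eventually.of_forall this)
  have hu1 : ‖u‖ = 1 := by
    have h1 : Tendsto (fun k => ‖x (φ k)‖) atTop (𝓝 ‖u‖) := hxtend.norm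
    have h2 : Tendsto (fun k => ‖x (φ k)‖) atTop (𝓝 1) := by
      simp only [hx1]; exact tendsto_const_nhds
    exact tendsto_nhds_unique h1 h2
  have hTu : T u = μ • u := by
    have h1 : Tendsto (fun k => T (x (φ k))) atTop (𝓝 (T u)) :=
      (T.continuous.tendsto u).comp hxtend
    have h2 : T u = y := tendsto_nhds_unique h1 hytend
    have h3 : μ • u = y := by
      rw [hu, smul_smul, mul_inv_cancel₀ hmu.ne', one_smul]
    rw [h2, h3]
  refine ⟨u, huV, hu1, ?_⟩
  have h4 : K (K u) = -(T u) := by rw [hTapp, neg_neg]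
  rw [h4, hTu, neg_smul]

theorem orthogonal_invariant (K : H →L[ℝ] H) (hK : adjoint K = -K) (W : Submodule ℝ H)
    (hWK : ∀ x ∈ W, K x ∈ W) : ∀ x ∈ Wᗮ, K x ∈ Wᗮ := by
  intro x hx
  rw [Submodule.mem_orthogonal]
  intro w hw
  rw [real_inner_comm, skew_inner K hK, real_inner_comm]
  rw [Submodule.mem_orthogonal] at hx
  rw [hx (K w) (hWK w hw)]
  ring

/-- The step lemma: in the orthogonal complement of a finite-dimensional invariant
subspace we can find an orthonormal pair on which `K` acts as a rotation block with
parameter `√(mu K Wᗮ)`. -/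
theorem step_lemma (K : H →L[ℝ] H) (hKcompact : IsCompactOperator K)
    (hK : adjoint K = -K) (hinf : ¬ FiniteDimensional ℝ H) (W : Submodule ℝ H)
    (hW : FiniteDimensional ℝ W) (hWK : ∀ x ∈ W, K x ∈ W) :
    ∃ p : H × H, p.1 ∈ Wᗮ ∧ p.2 ∈ Wᗮ ∧ ‖p.1‖ = 1 ∧ ‖p.2‖ = 1 ∧ ⟪p.1, p.2⟫ = 0 ∧
      K p.1 = Real.sqrt (mu K Wᗮ) • p.2 ∧ K p.2 = -Real.sqrt (mu K Wᗮ) • p.1 := by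
  obtain ⟨a, b, haW, hbW, ha1, hb1, hab⟩ := exists_pair_orthogonal hinf W hW
  have hne : ∃ x ∈ Wᗮ, ‖x‖ = 1 := ⟨a, haW, ha1⟩
  have hVK : ∀ x ∈ Wᗮ, K x ∈ Wᗮ := orthogonal_invariant K hK W hWK
  have hmu0 : 0 ≤ mu K Wᗮ := mu_nonneg K hne
  rcases hmu0.lt_or_eq with hmu | hmu
  · set μ := mu K Wᗮ with hmudef
    obtain ⟨u, huV, hu1, hKKu⟩ := exists_eigenvector K hKcompact hK Wᗮ
      (Submodule.isClosed_orthogonal W) hVK hne hmu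
    rw [← hmudef] at hKKu
    have hsqpos : 0 < Real.sqrt μ := Real.sqrt_pos.2 hmu
    have hsq : Real.sqrt μ * Real.sqrt μ = μ := Real.mul_self_sqrt hmu0
    set v := (Real.sqrt μ)⁻¹ • K u with hvdef
    have hKu2 : ‖K u‖ ^ 2 = μ := by
      have h1 : ‖K u‖ ^ 2 = ⟪K u, K u⟫ := (real_inner_self_eq_norm_sq _).symm
      rw [h1, skew_inner K hK, hKKu, inner_smul_right,
        real_inner_self_eq_norm_sq, hu1]
      ring
    have hKunorm : ‖K u‖ = Real.sqrt μ := by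
      rw [← hKu2, Real.sqrt_sq (norm_nonneg _)]
    refine ⟨(u, v), huV, Wᗮ.smul_mem _ (hVK u huV), hu1, ?_, ?_, ?_, ?_⟩
    · rw [hvdef, norm_smul, norm_inv, Real.norm_eq_abs, abs_of_pos hsqpos, hKunorm,
        inv_mul_cancel₀ hsqpos.ne']
    · rw [hvdef, inner_smul_right]
      have h2 : ⟪u, K u⟫ = 0 := by
        have h3 := skew_inner K hK u u
        have h4 := real_inner_comm u (K u)
        linarith
      rw [h2]; ring
    · show K u = Real.sqrt μ • v
      rw [hvdef, smul_smul, mul_inv_cancel₀ hsqpos.ne', one_smul]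
    · show K v = -Real.sqrt μ • u
      rw [hvdef, map_smul, hKKu, smul_smul]
      congr 1
      field_simp
      nlinarith [hsq]
  · have hKzero : ∀ x ∈ Wᗮ, K x = 0 := by
      intro x hx
      have h1 := norm_K_sq_le_mu K hx hne
      rw [← hmu] at h1
      have h2 : ‖K x‖ ^ 2 ≤ 0 := by simpa using h1
      have h3 : ‖K x‖ = 0 := by nlinarith [norm_nonneg (K x)]
      exact norm_eq_zero.1 h3
    refine ⟨(a, b), haW, hbW, ha1, hb1, hab, ?_, ?_⟩
    · rw [hKzero a haW, ← hmu, Real.sqrt_zero, zero_smul]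
    · rw [hKzero b hbW, ← hmu, Real.sqrt_zero, neg_zero, zero_smul]

open Classical in
/-- The chosen next orthonormal pair. -/
noncomputable def nextPair (K : H →L[ℝ] H) (W : Submodule ℝ H) : H × H :=
  if h : ∃ p : H × H, p.1 ∈ Wᗮ ∧ p.2 ∈ Wᗮ ∧ ‖p.1‖ = 1 ∧ ‖p.2‖ = 1 ∧ ⟪p.1, p.2⟫ = 0 ∧
      K p.1 = Real.sqrt (mu K Wᗮ) • p.2 ∧ K p.2 = -Real.sqrt (mu K Wᗮ) • p.1
  then h.choose else (0, 0)

theorem nextPair_spec {K : H →L[ℝ] H} {W : Submodule ℝ H}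
    (h : ∃ p : H × H, p.1 ∈ Wᗮ ∧ p.2 ∈ Wᗮ ∧ ‖p.1‖ = 1 ∧ ‖p.2‖ = 1 ∧ ⟪p.1, p.2⟫ = 0 ∧
      K p.1 = Real.sqrt (mu K Wᗮ) • p.2 ∧ K p.2 = -Real.sqrt (mu K Wᗮ) • p.1) :
    (nextPair K W).1 ∈ Wᗮ ∧ (nextPair K W).2 ∈ Wᗮ ∧ ‖(nextPair K W).1‖ = 1 ∧
      ‖(nextPair K W).2‖ = 1 ∧ ⟪(nextPair K W).1, (nextPair K W).2⟫ = 0 ∧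
      K (nextPair K W).1 = Real.sqrt (mu K Wᗮ) • (nextPair K W).2 ∧
      K (nextPair K W).2 = -Real.sqrt (mu K Wᗮ) • (nextPair K W).1 := by
  rw [nextPair, dif_pos h]
  exact h.choose_spec

/-- The increasing sequence of spanned subspaces. -/
noncomputable def Wseq (K : H →L[ℝ] H) : ℕ → Submodule ℝ H
  | 0 => ⊥
  | n + 1 => Wseq K n ⊔ ((ℝ ∙ (nextPair K (Wseq K n)).1) ⊔ (ℝ ∙ (nextPair K (Wseq K n)).2))

noncomputable def uSeq (K : H →L[ℝ] H) (n : ℕ) : H := (nextPair K (Wseq K n)).1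
noncomputable def vSeq (K : H →L[ℝ] H) (n : ℕ) : H := (nextPair K (Wseq K n)).2
noncomputable def lamSeq (K : H →L[ℝ] H) (n : ℕ) : ℝ := Real.sqrt (mu K (Wseq K n)ᗮ)

theorem Wseq_zero (K : H →L[ℝ] H) : Wseq K 0 = ⊥ := rfl

theorem Wseq_succ (K : H →L[ℝ] H) (n : ℕ) :
    Wseq K (n + 1) = Wseq K n ⊔ ((ℝ ∙ uSeq K n) ⊔ (ℝ ∙ vSeq K n)) := rfl

theorem Wseq_invariant (K : H →L[ℝ] H) (hKcompact : IsCompactOperator K)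
    (hK : adjoint K = -K) (hinf : ¬ FiniteDimensional ℝ H) :
    ∀ n, FiniteDimensional ℝ (Wseq K n) ∧ (∀ x ∈ Wseq K n, K x ∈ Wseq K n) := by
  intro n
  induction n with
  | zero =>
    constructor
    · show FiniteDimensional ℝ (⊥ : Submodule ℝ H); infer_instance
    · intro x hx
      rw [Wseq, Submodule.mem_bot] at hx ⊢
      rw [hx, map_zero]
  | succ n ih =>
    have hex := step_lemma K hKcompact hK hinf (Wseq K n) ih.1 ih.2
    obtain ⟨hu, hv, hu1, hv1, huv, hKu, hKv⟩ := nextPair_spec hex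
    constructor
    · have h1 := ih.1
      have heq : Wseq K (n + 1) =
          Wseq K n ⊔ ((ℝ ∙ (nextPair K (Wseq K n)).1) ⊔ (ℝ ∙ (nextPair K (Wseq K n)).2)) := rfl
      rw [heq]
      infer_instance
    · intro x hx
      rw [Wseq] at hx ⊢
      obtain ⟨w, hw, s, hs, rfl⟩ := Submodule.mem_sup.1 hx
      obtain ⟨p, hp, q, hq, rfl⟩ := Submodule.mem_sup.1 hs
      obtain ⟨c, rfl⟩ := Submodule.mem_span_singleton.1 hp
      obtain ⟨d, rfl⟩ := Submodule.mem_span_singleton.1 hq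
      rw [map_add, map_add, map_smul, map_smul, hKu, hKv]
      refine add_mem (Submodule.mem_sup_left (ih.2 w hw)) (add_mem ?_ ?_)
      · exact Submodule.mem_sup_right (Submodule.mem_sup_right
          (Submodule.smul_mem _ _ (Submodule.smul_mem _ _ (Submodule.mem_span_singleton_self _))))
      · exact Submodule.mem_sup_right (Submodule.mem_sup_left
          (Submodule.smul_mem _ _ (Submodule.smul_mem _ _ (Submodule.mem_span_singleton_self _))))

theorem pair_spec (K : H →L[ℝ] H) (hKcompact : IsCompactOperator K)
    (hK : adjoint K = -K) (hinf : ¬ FiniteDimensional ℝ H) (n : ℕ) :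
    uSeq K n ∈ (Wseq K n)ᗮ ∧ vSeq K n ∈ (Wseq K n)ᗮ ∧ ‖uSeq K n‖ = 1 ∧ ‖vSeq K n‖ = 1 ∧
      ⟪uSeq K n, vSeq K n⟫ = 0 ∧ K (uSeq K n) = lamSeq K n • vSeq K n ∧
      K (vSeq K n) = -lamSeq K n • uSeq K n := by
  have h := Wseq_invariant K hKcompact hK hinf n
  exact nextPair_spec (step_lemma K hKcompact hK hinf (Wseq K n) h.1 h.2)

theorem Wseq_mono (K : H →L[ℝ] H) : Monotone (Wseq K) :=
  monotone_nat_of_le_succ fun n => le_sup_left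

theorem uSeq_mem_succ (K : H →L[ℝ] H) (n : ℕ) : uSeq K n ∈ Wseq K (n + 1) :=
  Submodule.mem_sup_right (Submodule.mem_sup_left (Submodule.mem_span_singleton_self _))

theorem vSeq_mem_succ (K : H →L[ℝ] H) (n : ℕ) : vSeq K n ∈ Wseq K (n + 1) :=
  Submodule.mem_sup_right (Submodule.mem_sup_right (Submodule.mem_span_singleton_self _))

theorem uSeq_mem_of_lt (K : H →L[ℝ] H) {m n : ℕ} (h : m < n) : uSeq K m ∈ Wseq K n :=
  Wseq_mono K h (uSeq_mem_succ K m)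

theorem vSeq_mem_of_lt (K : H →L[ℝ] H) {m n : ℕ} (h : m < n) : vSeq K m ∈ Wseq K n :=
  Wseq_mono K h (vSeq_mem_succ K m)

theorem not_finiteDimensional (e : HilbertBasis ℕ ℝ H) : ¬ FiniteDimensional ℝ H := by
  intro hfin
  haveI : Finite ℕ := e.orthonormal.linearIndependent.finite
  exact not_finite ℕ

theorem hs_summable {ι : Type*} (K : H →L[ℝ] H) (hK : adjoint K = -K) (e : HilbertBasis ℕ ℝ H)
    (hHS : Summable fun n => ‖K (e n)‖ ^ 2) (w : ι → H) (hw : Orthonormal ℝ w) :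
    Summable fun i => ‖K (w i)‖ ^ 2 := by
  have hterm : ∀ i, HasSum (fun n => ⟪w i, K (e n)⟫ ^ 2) (‖K (w i)‖ ^ 2) := by
    intro i
    have h0 := e.hasSum_inner_mul_inner (K (w i)) (K (w i))
    have h1 : ⟪K (w i), K (w i)⟫ = ‖K (w i)‖ ^ 2 := real_inner_self_eq_norm_sq _
    rw [h1] at h0
    have h2 : (fun n => ⟪w i, K (e n)⟫ ^ 2) =
        fun n => ⟪K (w i), e n⟫ * ⟪e n, K (w i)⟫ := by
      funext n
      have hc : ⟪e n, K (w i)⟫ = ⟪K (w i), e n⟫ := real_inner_comm _ _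
      have hs := skew_inner K hK (w i) (e n)
      rw [hc, hs]
      ring
    rw [h2]
    exact h0
  apply summable_of_sum_le (c := ∑' n, ‖K (e n)‖ ^ 2)
  · intro i
    positivity
  · intro s
    have h2 : ∑ i ∈ s, ‖K (w i)‖ ^ 2 = ∑ i ∈ s, ∑' n, ⟪w i, K (e n)⟫ ^ 2 :=
      Finset.sum_congr rfl fun i _ => ((hterm i).tsum_eq).symm
    rw [h2, ← Summable.tsum_finsetSum fun i _ => (hterm i).summable]
    apply Summable.tsum_le_tsum
    · intro n
      have h3 := hw.sum_inner_products_le (K (e n)) (s := s)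
      simpa [Real.norm_eq_abs, sq_abs] using h3
    · exact summable_sum fun i _ => (hterm i).summable
    · exact hHS

theorem orthonormal_seq (K : H →L[ℝ] H) (hKcompact : IsCompactOperator K)
    (hK : adjoint K = -K) (hinf : ¬ FiniteDimensional ℝ H) :
    Orthonormal ℝ (Sum.elim (uSeq K) (vSeq K)) := by
  have hspec := pair_spec K hKcompact hK hinf
  have hin : ∀ {x : H} {m n : ℕ}, m < n → x ∈ Wseq K n → ⟪x, uSeq K n⟫ = 0 ∧ ⟪x, vSeq K n⟫ = 0 :=
    fun {x m n} h hx =>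
      ⟨(Submodule.mem_orthogonal _ _).1 (hspec n).1 x hx,
       (Submodule.mem_orthogonal _ _).1 (hspec n).2.1 x hx⟩
  have huu : ∀ {m n : ℕ}, m < n → ⟪uSeq K m, uSeq K n⟫ = 0 :=
    fun {m n} h => (hin h (uSeq_mem_of_lt K h)).1
  have huv : ∀ {m n : ℕ}, m < n → ⟪uSeq K m, vSeq K n⟫ = 0 :=
    fun {m n} h => (hin h (uSeq_mem_of_lt K h)).2
  have hvu : ∀ {m n : ℕ}, m < n → ⟪vSeq K m, uSeq K n⟫ = 0 :=
    fun {m n} h => (hin h (vSeq_mem_of_lt K h)).1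
  have hvv : ∀ {m n : ℕ}, m < n → ⟪vSeq K m, vSeq K n⟫ = 0 :=
    fun {m n} h => (hin h (vSeq_mem_of_lt K h)).2
  rw [orthonormal_iff_ite]
  rintro (m | m) (n | n) <;> simp only [Sum.elim_inl, Sum.elim_inr]
  · rcases lt_trichotomy m n with h | rfl | h
    · rw [huu h, if_neg (by simp [h.ne])]
    · rw [if_pos rfl, real_inner_self_eq_norm_sq, (hspec m).2.2.1, one_pow]
    · rw [real_inner_comm, huu h, if_neg (by simp [h.ne'])]
  · rcases lt_trichotomy m n with h | rfl | h
    · rw [huv h, if_neg (by simp)]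
    · rw [(hspec m).2.2.2.2.1, if_neg (by simp)]
    · rw [real_inner_comm, hvu h, if_neg (by simp)]
  · rcases lt_trichotomy m n with h | rfl | h
    · rw [hvu h, if_neg (by simp)]
    · rw [real_inner_comm, (hspec m).2.2.2.2.1, if_neg (by simp)]
    · rw [real_inner_comm, huv h, if_neg (by simp)]
  · rcases lt_trichotomy m n with h | rfl | h
    · rw [hvv h, if_neg (by simp [h.ne])]
    · rw [if_pos rfl, real_inner_self_eq_norm_sq, (hspec m).2.2.2.1, one_pow]
    · rw [real_inner_comm, hvv h, if_neg (by simp [h.ne'])]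

end Aux

/-- Spectral decomposition of a compact skew-adjoint Hilbert–Schmidt operator: it can be
written as a convergent series of rank-2 skew-adjoint blocks
`K f = ∑' j, λ j • (⟪u j, f⟫ • v j − ⟪v j, f⟫ • u j)` with `{u j} ∪ {v j}` orthonormal
and `(λ j)` nonnegative square-summable. -/
theorem stmt_4 {H : Type*} [NormedAddCommGroup H] [InnerProductSpace ℝ H] [CompleteSpace H]
    (e : HilbertBasis ℕ ℝ H)
    (K : H →L[ℝ] H)
    (hKcompact : IsCompactOperator K)
    (hK : adjoint K = -K)
    (hHS : Summable fun n => ‖K (e n)‖ ^ 2) :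
    ∃ (u v : ℕ → H) (lam : ℕ → ℝ),
      Orthonormal ℝ (Sum.elim u v) ∧
      (∀ j, 0 ≤ lam j) ∧
      Summable (fun j => lam j ^ 2) ∧
      ∀ f : H, HasSum (fun j => lam j • (⟪u j, f⟫ • v j - ⟪v j, f⟫ • u j)) (K f) := by
  have hinf : ¬ FiniteDimensional ℝ H := not_finiteDimensional e
  have hspec := pair_spec K hKcompact hK hinf
  have horm : Orthonormal ℝ (Sum.elim (uSeq K) (vSeq K)) :=
    orthonormal_seq K hKcompact hK hinf
  have honu : Orthonormal ℝ (uSeq K) := by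
    have h1 := horm.comp Sum.inl Sum.inl_injective
    simpa using h1
  have honv : Orthonormal ℝ (vSeq K) := by
    have h1 := horm.comp Sum.inr Sum.inr_injective
    simpa using h1
  have hlam_nonneg : ∀ j, 0 ≤ lamSeq K j := fun j => Real.sqrt_nonneg _
  have hlamsq : ∀ n, lamSeq K n ^ 2 = ‖K (uSeq K n)‖ ^ 2 := by
    intro n
    rw [(hspec n).2.2.2.2.2.1, norm_smul, Real.norm_eq_abs,
      abs_of_nonneg (hlam_nonneg n), (hspec n).2.2.2.1, mul_one]
  have hsumlam : Summable fun j => lamSeq K j ^ 2 := by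
    have h1 := hs_summable K hK e hHS (uSeq K) honu
    exact h1.congr fun n => (hlamsq n).symm
  refine ⟨uSeq K, vSeq K, lamSeq K, horm, hlam_nonneg, hsumlam, ?_⟩
  intro f
  set a : ℕ → H := fun j => lamSeq K j • (⟪uSeq K j, f⟫ • vSeq K j - ⟪vSeq K j, f⟫ • uSeq K j)
    with hadef
  set g : ℕ → H := fun n =>
    ∑ j ∈ Finset.range n, (⟪uSeq K j, f⟫ • uSeq K j + ⟪vSeq K j, f⟫ • vSeq K j) with hgdef
  have hg_mem : ∀ n, g n ∈ Wseq K n := by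
    intro n
    refine Submodule.sum_mem _ fun j hj => ?_
    have hj' : j < n := Finset.mem_range.1 hj
    exact add_mem (Submodule.smul_mem _ _ (uSeq_mem_of_lt K hj'))
      (Submodule.smul_mem _ _ (vSeq_mem_of_lt K hj'))
  have hres : ∀ n, f - g n ∈ (Wseq K n)ᗮ := by
    intro n
    induction n with
    | zero =>
      rw [Wseq_zero, Submodule.bot_orthogonal_eq_top]
      exact Submodule.mem_top
    | succ n ih =>
      have hgsucc : g (n + 1) = g n + (⟪uSeq K n, f⟫ • uSeq K n + ⟪vSeq K n, f⟫ • vSeq K n) :=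
        Finset.sum_range_succ _ n
      have hsplit : f - g (n + 1) =
          (f - g n) - (⟪uSeq K n, f⟫ • uSeq K n + ⟪vSeq K n, f⟫ • vSeq K n) := by
        rw [hgsucc]; abel
      have hgu : ⟪uSeq K n, g n⟫ = 0 := by
        rw [real_inner_comm]
        exact (Submodule.mem_orthogonal _ _).1 (hspec n).1 (g n) (hg_mem n)
      have hgv : ⟪vSeq K n, g n⟫ = 0 := by
        rw [real_inner_comm]
        exact (Submodule.mem_orthogonal _ _).1 (hspec n).2.1 (g n) (hg_mem n)
      rw [Wseq_succ, ← Submodule.inf_orthogonal, ← Submodule.inf_orthogonal]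
      refine Submodule.mem_inf.2 ⟨?_, Submodule.mem_inf.2 ⟨?_, ?_⟩⟩
      · rw [hsplit]
        exact sub_mem ih (add_mem (Submodule.smul_mem _ _ (hspec n).1)
          (Submodule.smul_mem _ _ (hspec n).2.1))
      · rw [Submodule.mem_orthogonal_singleton_iff_inner_right, hsplit]
        rw [inner_sub_right, inner_sub_right, inner_add_right, inner_smul_right,
          inner_smul_right, hgu, real_inner_self_eq_norm_sq, (hspec n).2.2.1,
          (hspec n).2.2.2.2.1]
        ring
      · have h0 : ⟪vSeq K n, uSeq K n⟫ = 0 := by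
          rw [real_inner_comm]; exact (hspec n).2.2.2.2.1
        rw [Submodule.mem_orthogonal_singleton_iff_inner_right, hsplit]
        rw [inner_sub_right, inner_sub_right, inner_add_right, inner_smul_right,
          inner_smul_right, hgv, real_inner_self_eq_norm_sq, (hspec n).2.2.2.1, h0]
        ring
  have hKg : ∀ n, K (g n) = ∑ j ∈ Finset.range n, a j := by
    intro n
    rw [hgdef]
    simp only [map_sum]
    refine Finset.sum_congr rfl fun j _ => ?_
    rw [map_add, map_smul, map_smul, (hspec j).2.2.2.2.2.1, (hspec j).2.2.2.2.2.2]
    show _ = lamSeq K j • (⟪uSeq K j, f⟫ • vSeq K j - ⟪vSeq K j, f⟫ • uSeq K j)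
    module
  have hne : ∀ n, ∃ x ∈ (Wseq K n)ᗮ, ‖x‖ = 1 := fun n => ⟨uSeq K n, (hspec n).1, (hspec n).2.2.1⟩
  have hbound : ∀ n, ‖K f - ∑ j ∈ Finset.range n, a j‖ ≤ lamSeq K n * ‖f‖ := by
    intro n
    have h1 : K f - ∑ j ∈ Finset.range n, a j = K (f - g n) := by
      rw [map_sub, hKg n]
    have h2 : ‖K (f - g n)‖ ^ 2 ≤ mu K (Wseq K n)ᗮ * ‖f - g n‖ ^ 2 :=
      norm_K_sq_le_mu K (hres n) (hne n)
    have hmu0 : 0 ≤ mu K (Wseq K n)ᗮ := mu_nonneg K (hne n)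
    have h3 : mu K (Wseq K n)ᗮ = lamSeq K n ^ 2 := by
      rw [lamSeq, Real.sq_sqrt hmu0]
    have h4 : ‖f - g n‖ ≤ ‖f‖ := by
      have h5 : ⟪g n, f - g n⟫ = 0 :=
        (Submodule.mem_orthogonal _ _).1 (hres n) (g n) (hg_mem n)
      have h6 : ‖f‖ ^ 2 = ‖g n‖ ^ 2 + ‖f - g n‖ ^ 2 := by
        have h7 : f = g n + (f - g n) := by abel
        calc ‖f‖ ^ 2 = ‖g n + (f - g n)‖ ^ 2 := by rw [← h7]
          _ = ‖g n‖ ^ 2 + 2 * ⟪g n, f - g n⟫ + ‖f - g n‖ ^ 2 := norm_add_sq_real _ _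
          _ = ‖g n‖ ^ 2 + ‖f - g n‖ ^ 2 := by rw [h5]; ring
      nlinarith [norm_nonneg (f - g n), norm_nonneg f, norm_nonneg (g n)]
    have h8 : ‖K (f - g n)‖ ^ 2 ≤ (lamSeq K n * ‖f‖) ^ 2 := by
      rw [h3] at h2
      have h9 : ‖f - g n‖ ^ 2 ≤ ‖f‖ ^ 2 := by nlinarith [norm_nonneg (f - g n)]
      calc ‖K (f - g n)‖ ^ 2 ≤ lamSeq K n ^ 2 * ‖f - g n‖ ^ 2 := h2
        _ ≤ lamSeq K n ^ 2 * ‖f‖ ^ 2 := by nlinarith [sq_nonneg (lamSeq K n)]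
        _ = (lamSeq K n * ‖f‖) ^ 2 := by ring
    rw [h1]
    have h10 : 0 ≤ lamSeq K n * ‖f‖ := mul_nonneg (hlam_nonneg n) (norm_nonneg f)
    nlinarith [norm_nonneg (K (f - g n))]
  have hlam0 : Tendsto (lamSeq K) atTop (𝓝 0) := by
    have h1 : Tendsto (fun j => lamSeq K j ^ 2) atTop (𝓝 0) := hsumlam.tendsto_atTop_zero
    have h2 := (Real.continuous_sqrt.tendsto 0).comp h1
    simp only [Function.comp_def, Real.sqrt_zero] at h2
    refine h2.congr fun j => ?_
    rw [Real.sqrt_sq (hlam_nonneg j)]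
  have htendsto : Tendsto (fun n => ∑ j ∈ Finset.range n, a j) atTop (𝓝 (K f)) := by
    rw [tendsto_iff_norm_sub_tendsto_zero]
    apply tendsto_of_tendsto_of_tendsto_of_le_of_le (g := fun _ : ℕ => (0:ℝ))
      (h := fun n => lamSeq K n * ‖f‖)
    · exact tendsto_const_nhds
    · simpa using hlam0.mul_const ‖f‖
    · intro n; positivity
    · intro n
      show ‖∑ j ∈ Finset.range n, a j - K f‖ ≤ lamSeq K n * ‖f‖
      rw [norm_sub_rev]
      exact hbound n
  have hsummable : Summable a := by
    have hinneru : Summable fun j => ⟪uSeq K j, f⟫ ^ 2 := by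
      have h1 := honu.inner_products_summable (x := f)
      refine h1.congr fun j => ?_
      rw [Real.norm_eq_abs, sq_abs]
    have hinnerv : Summable fun j => ⟪vSeq K j, f⟫ ^ 2 := by
      have h1 := honv.inner_products_summable (x := f)
      refine h1.congr fun j => ?_
      rw [Real.norm_eq_abs, sq_abs]
    have hsu : Summable fun j => lamSeq K j * |⟪uSeq K j, f⟫| := by
      apply Summable.of_nonneg_of_le
        (fun j => mul_nonneg (hlam_nonneg j) (abs_nonneg _))
        (fun j => ?_) (((hsumlam.add hinneru).div_const 2))
      have := sq_nonneg (lamSeq K j - |⟪uSeq K j, f⟫|)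
      have h2 : |⟪uSeq K j, f⟫| ^ 2 = ⟪uSeq K j, f⟫ ^ 2 := sq_abs _
      nlinarith [abs_nonneg (⟪uSeq K j, f⟫), hlam_nonneg j]
    have hsv : Summable fun j => lamSeq K j * |⟪vSeq K j, f⟫| := by
      apply Summable.of_nonneg_of_le
        (fun j => mul_nonneg (hlam_nonneg j) (abs_nonneg _))
        (fun j => ?_) (((hsumlam.add hinnerv).div_const 2))
      have := sq_nonneg (lamSeq K j - |⟪vSeq K j, f⟫|)
      have h2 : |⟪vSeq K j, f⟫| ^ 2 = ⟪vSeq K j, f⟫ ^ 2 := sq_abs _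
      nlinarith [abs_nonneg (⟪vSeq K j, f⟫), hlam_nonneg j]
    apply Summable.of_norm_bounded (hsu.add hsv)
    intro j
    rw [hadef]
    simp only []
    rw [norm_smul, Real.norm_eq_abs, abs_of_nonneg (hlam_nonneg j)]
    refine le_trans (mul_le_mul_of_nonneg_left (norm_sub_le _ _) (hlam_nonneg j)) ?_
    rw [norm_smul, norm_smul, Real.norm_eq_abs, Real.norm_eq_abs, (hspec j).2.2.1,
      (hspec j).2.2.2.1, mul_one, mul_one, mul_add]
  have hhs := hsummable.hasSum
  have heq : ∑' j, a j = K f := tendsto_nhds_unique hhs.tendsto_sum_nat htendsto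
  rwa [heq] at hhs
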